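/- Tree summability for large scales: Let T be a finite rooted tree and let η : T → ℝ. Assume that for every nonempty lower set S ⊆ T one has ∑_{u∈S} η(u) < 0. Then the family of nonnegative real numbers ∏_{u∈T} 2^{−η(u)·n(u)}, indexed by all monotone functions n : T → ℤ satisfying n(u) ≤ 0 for every u ∈ T, is summable. -/

import Mathlib

set_option maxHeartbeats 800000

open Finset

/-- Summability of products of geometric terms over `Fin k → ℕ`. -/
lemma summable_fin_pi_geom : ∀ (k : ℕ) {r : ℝ}, 0 ≤ r → r < 1 →
    Summable (fun m : Fin k → ℕ => ∏ i, r ^ m i) := by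
  intro k
  induction k with
  | zero =>
    intro r _ _
    exact summable_of_finite_support (Set.toFinite _)
  | succ k ih =>
    intro r h0 h1
    have h2 : Summable (fun p : ℕ × (Fin k → ℕ) => r ^ p.1 * ∏ i, r ^ p.2 i) := by
      have hf : Summable (fun n : ℕ => ‖r ^ n‖) := by
        simpa [abs_pow, abs_of_nonneg h0] using summable_geometric_of_lt_one h0 h1
      have hg : Summable (fun m : Fin k → ℕ => ‖∏ i, r ^ m i‖) := by
        refine (ih h0 h1).congr fun m => ?_
        rw [Real.norm_eq_abs, abs_of_nonneg (Finset.prod_nonneg fun i _ => pow_nonneg h0 _)]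
      apply summable_mul_of_summable_norm hf hg
    let e : ℕ × (Fin k → ℕ) ≃ (Fin (k+1) → ℕ) := Fin.consEquiv (fun _ => ℕ)
    refine e.summable_iff.mp (h2.congr fun p => ?_)
    show r ^ p.1 * ∏ i, r ^ p.2 i = ∏ i, r ^ (Fin.cons p.1 p.2 i)
    rw [Fin.prod_univ_succ]
    simp

/-- Summability of products of geometric terms over `ι → ℕ`, `ι` a fintype. -/
lemma summable_pi_geom {ι : Type} [Fintype ι] {r : ℝ} (h0 : 0 ≤ r) (h1 : r < 1) :
    Summable (fun m : ι → ℕ => ∏ i, r ^ m i) := by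
  classical
  let e : ι ≃ Fin (Fintype.card ι) := Fintype.equivFin ι
  let E : (ι → ℕ) ≃ (Fin (Fintype.card ι) → ℕ) := Equiv.arrowCongr e (Equiv.refl ℕ)
  refine E.symm.summable_iff.mp
    (((summable_fin_pi_geom (Fintype.card ι) h0 h1)).congr fun m' => ?_)
  show ∏ j, r ^ m' j = ∏ i : ι, r ^ (E.symm m' i)
  have : ∀ i : ι, E.symm m' i = m' (e i) := fun i => rfl
  simp only [this]
  exact (Fintype.prod_equiv e (fun i => r ^ m' (e i)) (fun j => r ^ m' j) (fun i => rfl)).symm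

/-- Key inequality: if every nonempty lower set `S` has `∑ η ≤ -(c * card T)`, then for
any antitone `m : T → ℕ` we get `∑ η u * m u ≤ -c * ∑ m u`. -/
lemma key_sum_le {T : Type} [Fintype T] [PartialOrder T]
    (η : T → ℝ) (c : ℝ) (hc : 0 ≤ c)
    (hσ : ∀ S : Finset T, S.Nonempty → (∀ u ∈ S, ∀ v : T, v ≤ u → v ∈ S) →
      ∑ u ∈ S, η u ≤ -(c * Fintype.card T)) :
    ∀ (N : ℕ) (m : T → ℕ), Antitone m → ∑ u, m u = N →
      ∑ u, η u * (m u : ℝ) ≤ -c * N := by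
  classical
  intro N
  induction N using Nat.strong_induction_on with
  | _ N ih =>
    intro m hm hN
    rcases Nat.eq_zero_or_pos N with h0 | hpos
    · subst h0
      have hz : ∀ u, m u = 0 := by
        intro u
        have := Finset.sum_eq_zero_iff.mp hN
        exact this u (mem_univ u)
      simp [hz]
    · -- the set of u with m u > 0 is a nonempty lower set
      set S : Finset T := univ.filter (fun u => 0 < m u) with hS
      have hSne : S.Nonempty := by
        by_contra h
        have : ∀ u, m u = 0 := by
          intro u
          by_contra hu
          exact h ⟨u, by simp [hS, Nat.pos_of_ne_zero hu]⟩
        simp [this] at hN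
        omega
      have hSlow : ∀ u ∈ S, ∀ v : T, v ≤ u → v ∈ S := by
        intro u hu v hv
        simp only [hS, mem_filter, mem_univ, true_and] at hu ⊢
        exact lt_of_lt_of_le hu (hm hv)
      set m' : T → ℕ := fun u => m u - 1 with hm'
      have hm'anti : Antitone m' := fun u v huv => Nat.sub_le_sub_right (hm huv) 1
      have hsplit : ∀ u, m u = m' u + (if u ∈ S then 1 else 0) := by
        intro u
        by_cases h : u ∈ S
        · simp only [hS, mem_filter, mem_univ, true_and] at h
          simp [hm', h, hS, Nat.sub_add_cancel h]
        · have : m u = 0 := by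
            by_contra h'
            exact h (by simp [hS, Nat.pos_of_ne_zero h'])
          simp [hm', this, h]
      have hsumN : N = (∑ u, m' u) + S.card := by
        rw [← hN]
        rw [Finset.sum_congr rfl fun u _ => hsplit u, Finset.sum_add_distrib]
        congr 1
        simp [Finset.sum_ite_mem]
      have hlt : (∑ u, m' u) < N := by
        have := Finset.card_pos.mpr hSne
        omega
      have hIH := ih _ hlt m' hm'anti rfl
      have hsplitR : ∑ u, η u * (m u : ℝ) = (∑ u, η u * (m' u : ℝ)) + ∑ u ∈ S, η u := by
        have hS' : ∑ u ∈ S, η u = ∑ u, (if u ∈ S then η u else 0) := by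
          rw [Finset.sum_ite_mem, Finset.univ_inter]
        rw [hS', ← Finset.sum_add_distrib]
        refine Finset.sum_congr rfl fun u _ => ?_
        rw [hsplit u]
        by_cases h : u ∈ S <;> simp [h] <;> ring
      have hσS := hσ S hSne hSlow
      have hcard : (S.card : ℝ) ≤ (Fintype.card T : ℝ) := by
        exact_mod_cast Finset.card_le_card (Finset.subset_univ S)
      calc ∑ u, η u * (m u : ℝ) = (∑ u, η u * (m' u : ℝ)) + ∑ u ∈ S, η u := hsplitR
        _ ≤ -c * (∑ u, m' u : ℕ) + -(c * Fintype.card T) := add_le_add hIH hσS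
        _ ≤ -c * (∑ u, m' u : ℕ) + -(c * S.card) := by
            have := mul_le_mul_of_nonneg_left hcard hc
            linarith
        _ = -c * N := by
            rw [hsumN]
            push_cast
            ring

/-- Tree summability for large scales: on a finite rooted tree `T` (partial order with least
element whose principal down-sets are chains), if every nonempty lower set `S ⊆ T` satisfies
`∑_{u ∈ S} η u < 0`, then the family `∏_u 2^{-η(u) n(u)}`, indexed by monotone
`n : T → ℤ` with `n ≤ 0`, is summable. -/
theorem tree_summability_large_scales
    (T : Type) [Fintype T] [PartialOrder T] [OrderBot T]
    (hchain : ∀ u v w : T, v ≤ u → w ≤ u → v ≤ w ∨ w ≤ v)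
    (η : T → ℝ)
    (hη : ∀ S : Finset T, S.Nonempty → (∀ u ∈ S, ∀ v : T, v ≤ u → v ∈ S) →
      ∑ u ∈ S, η u < 0) :
    Summable (fun n : {n : T → ℤ // Monotone n ∧ ∀ u : T, n u ≤ 0} =>
      ∏ u : T, (2 : ℝ) ^ (-(η u * (n.1 u : ℝ)))) := by
  classical
  -- the collection of nonempty lower sets
  set L : Finset (Finset T) :=
    univ.filter (fun S => S.Nonempty ∧ ∀ u ∈ S, ∀ v : T, v ≤ u → v ∈ S) with hL
  have hLne : L.Nonempty := by
    refine ⟨{⊥}, ?_⟩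
    simp only [hL, mem_filter, mem_univ, true_and]
    constructor
    · exact ⟨⊥, mem_singleton_self ⊥⟩
    · intro u hu v hv
      simp only [mem_singleton] at hu ⊢
      exact le_antisymm (hu ▸ hv) bot_le
  set ε : ℝ := -(L.sup' hLne (fun S => ∑ u ∈ S, η u)) with hε
  have hεpos : 0 < ε := by
    rw [hε, neg_pos]
    rw [Finset.sup'_lt_iff]
    intro S hSm
    simp only [hL, mem_filter, mem_univ, true_and] at hSm
    exact hη S hSm.1 hSm.2
  have hcardpos : 0 < (Fintype.card T : ℝ) := by
    have : Nonempty T := ⟨⊥⟩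
    exact_mod_cast Fintype.card_pos
  set c : ℝ := ε / Fintype.card T with hc
  have hcpos : 0 < c := div_pos hεpos hcardpos
  have hσ : ∀ S : Finset T, S.Nonempty → (∀ u ∈ S, ∀ v : T, v ≤ u → v ∈ S) →
      ∑ u ∈ S, η u ≤ -(c * Fintype.card T) := by
    intro S hSne hSlow
    have hmem : S ∈ L := by
      simp only [hL, mem_filter, mem_univ, true_and]
      exact ⟨hSne, hSlow⟩
    have := Finset.le_sup' (fun S => ∑ u ∈ S, η u) hmem
    have hεc : c * Fintype.card T = ε := div_mul_cancel₀ ε (ne_of_gt hcardpos)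
    rw [hεc]
    linarith [this]
  -- the geometric ratio
  set r : ℝ := (2 : ℝ) ^ (-c) with hr
  have hr0 : 0 < r := Real.rpow_pos_of_pos (by norm_num) _
  have hr1 : r < 1 :=
    Real.rpow_lt_one_of_one_lt_of_neg (by norm_num) (neg_neg_iff_pos.mpr hcpos)
  -- embedding into T → ℕ
  set emb : {n : T → ℤ // Monotone n ∧ ∀ u : T, n u ≤ 0} → (T → ℕ) :=
    fun n => fun u => (-(n.1 u)).toNat with hemb
  have hinj : Function.Injective emb := by
    intro n₁ n₂ h
    ext u
    have h1 : (-(n₁.1 u)).toNat = (-(n₂.1 u)).toNat := congrFun h u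
    have e1 : (0:ℤ) ≤ -(n₁.1 u) := by linarith [n₁.2.2 u]
    have e2 : (0:ℤ) ≤ -(n₂.1 u) := by linarith [n₂.2.2 u]
    have := congrArg (fun k : ℕ => (k : ℤ)) h1
    simp only [Int.toNat_of_nonneg e1, Int.toNat_of_nonneg e2] at this
    linarith
  have hsummg : Summable (fun m : T → ℕ => ∏ u, r ^ m u) := summable_pi_geom hr0.le hr1
  have hcomp : Summable ((fun m : T → ℕ => ∏ u, r ^ m u) ∘ emb) :=
    hsummg.comp_injective hinj
  refine Summable.of_nonneg_of_le (fun n => Finset.prod_nonneg fun u _ =>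
    (Real.rpow_pos_of_pos (by norm_num) _).le) (fun n => ?_) hcomp
  -- bound each term
  set m : T → ℕ := emb n with hmdef
  have hmcast : ∀ u, ((m u : ℤ) : ℝ) = -((n.1 u : ℝ)) := by
    intro u
    have e1 : (0:ℤ) ≤ -(n.1 u) := by linarith [n.2.2 u]
    have : (m u : ℤ) = -(n.1 u) := Int.toNat_of_nonneg e1
    rw [this]; push_cast; ring
  have hmanti : Antitone m := by
    intro u v huv
    have := n.2.1 huv
    simp only [hmdef, hemb]
    exact Int.toNat_le_toNat (by linarith)
  -- rewrite product as a single rpow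
  have hprod : ∀ (f : T → ℝ), ∏ u, (2 : ℝ) ^ (f u) = (2 : ℝ) ^ (∑ u, f u) := by
    intro f
    induction (univ : Finset T) using Finset.induction with
    | empty => simp
    | insert _ _ hx ih => rw [Finset.prod_insert hx, Finset.sum_insert hx, Real.rpow_add (by norm_num), ih]
  have h1 : ∏ u : T, (2 : ℝ) ^ (-(η u * (n.1 u : ℝ))) = (2:ℝ) ^ (∑ u, η u * (m u : ℝ)) := by
    rw [hprod]
    congr 1
    refine Finset.sum_congr rfl fun u _ => ?_
    have := hmcast u
    push_cast at this
    rw [this]; ring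
  have h2 : ∑ u, η u * (m u : ℝ) ≤ -c * (∑ u, m u : ℕ) :=
    key_sum_le η c hcpos.le hσ _ m hmanti rfl
  have h3 : (2:ℝ) ^ (∑ u, η u * (m u : ℝ)) ≤ (2:ℝ) ^ (-c * (∑ u, m u : ℕ)) :=
    Real.rpow_le_rpow_of_exponent_le (by norm_num) h2
  have h4 : (2:ℝ) ^ (-c * (∑ u, m u : ℕ)) = ∏ u, r ^ m u := by
    have : (-c) * ((∑ u, m u : ℕ) : ℝ) = ∑ u, (-c) * (m u : ℝ) := by
      rw [← Finset.mul_sum]; push_cast; ring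
    rw [this, ← hprod]
    refine Finset.prod_congr rfl fun u _ => ?_
    rw [mul_comm, Real.rpow_natCast_mul (by norm_num) (m u) (-c)]
    rw [← Real.rpow_natCast ((2:ℝ) ^ (-c)) (m u)]
    rw [← Real.rpow_natCast (2:ℝ) (m u), ← Real.rpow_mul (by norm_num),
      ← Real.rpow_mul (by norm_num), mul_comm]
  calc ∏ u : T, (2 : ℝ) ^ (-(η u * (n.1 u : ℝ)))
      = (2:ℝ) ^ (∑ u, η u * (m u : ℝ)) := h1
    _ ≤ (2:ℝ) ^ (-c * (∑ u, m u : ℕ)) := h3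
    _ = ∏ u, r ^ m u := h4
    _ = ((fun m : T → ℕ => ∏ u, r ^ m u) ∘ emb) n := rfl
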